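/- If f(s) = ½sᵀWs + bᵀs with the same W used in preconditioning, then the Vanilla Preconditioned Discrete-HAMS generalized acceptance probability equals 1 for every (s_t, v_{t+1/2}) and every proposal (s*, v*); i.e., the sampler is rejection-free for quadratic potentials. -/
import Mathlib


open Matrix

/-- Vanilla Preconditioned Discrete-HAMS is rejection-free for a quadratic potential
f(s) = ½sᵀWs + bᵀs with the same W used in preconditioning: the generalized acceptance
ratio equals 1 for every (s_t, v_{t+1/2}) and every proposal (s*, v*), where
v_{t+1/2} = s_t − z_t and v* = z_t − s*. -/
theorem stmt13 {d : ℕ} (S : Finset (Fin d → ℝ))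
    (W D : Matrix (Fin d) (Fin d) ℝ)
    (hW : W.IsSymm) (hD : D.IsDiag) (hpos : (W + D).PosDef)
    (b zt st sstar : Fin d → ℝ) (hst : st ∈ S) (hsstar : sstar ∈ S)
    (f : (Fin d → ℝ) → ℝ) (hf : ∀ s, f s = (1 / 2) * (s ⬝ᵥ (W *ᵥ s)) + b ⬝ᵥ s)
    (pr : (Fin d → ℝ) → (Fin d → ℝ) → ℝ)
    (hpr : ∀ s v, pr s v = Real.exp (f s - (1 / 2) * (v ⬝ᵥ ((W + D) *ᵥ v))))
    (Q : (Fin d → ℝ) → ℝ)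
    (hQ : ∀ s, Q s =
      Real.exp (-(1 / 2) * (s ⬝ᵥ (D *ᵥ s)) + (b + (W + D) *ᵥ zt) ⬝ᵥ s) /
        ∑ s' ∈ S, Real.exp (-(1 / 2) * (s' ⬝ᵥ (D *ᵥ s')) + (b + (W + D) *ᵥ zt) ⬝ᵥ s')) :
    pr sstar (-(zt - sstar)) * Q st / (pr st (st - zt) * Q sstar) = 1 := by
  have hA : (W + D).IsSymm := by
    rw [Matrix.IsSymm, Matrix.transpose_add, hW, hD.isSymm]
  have hsym : ∀ x y : Fin d → ℝ, x ⬝ᵥ (W + D) *ᵥ y = y ⬝ᵥ (W + D) *ᵥ x := by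
    intro x y
    rw [Matrix.dotProduct_mulVec, ← Matrix.mulVec_transpose, hA, dotProduct_comm]
  set Z : ℝ := ∑ s' ∈ S, Real.exp (-(1 / 2) * (s' ⬝ᵥ (D *ᵥ s')) + (b + (W + D) *ᵥ zt) ⬝ᵥ s')
    with hZdef
  have hZ : 0 < Z :=
    Finset.sum_pos (fun _ _ => Real.exp_pos _) ⟨st, hst⟩
  rw [hpr, hpr, hQ, hQ, hf, hf]
  rw [div_eq_one_iff_eq]
  · rw [mul_div_assoc', mul_div_assoc', ← Real.exp_add, ← Real.exp_add]
    congr 1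
    simp only [Matrix.mulVec_sub, Matrix.mulVec_neg, Matrix.mulVec_add, dotProduct_sub,
      dotProduct_neg, dotProduct_add, sub_dotProduct, neg_dotProduct, add_dotProduct,
      neg_neg, Matrix.dotProduct_mulVec, Matrix.sub_vecMul, Matrix.neg_vecMul]
    have h1 : sstar ᵥ* (W + D) ⬝ᵥ zt = zt ᵥ* (W + D) ⬝ᵥ sstar := by
      rw [← Matrix.dotProduct_mulVec, ← Matrix.dotProduct_mulVec, hsym]
    have h2 : st ᵥ* (W + D) ⬝ᵥ zt = zt ᵥ* (W + D) ⬝ᵥ st := by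
      rw [← Matrix.dotProduct_mulVec, ← Matrix.dotProduct_mulVec, hsym]
    have h3 : ∀ x : Fin d → ℝ, x ᵥ* (W + D) ⬝ᵥ x = x ᵥ* W ⬝ᵥ x + x ᵥ* D ⬝ᵥ x := by
      intro x
      rw [Matrix.vecMul_add, add_dotProduct]
    have h4 : ∀ s : Fin d → ℝ, (W + D) *ᵥ zt ⬝ᵥ s = zt ᵥ* (W + D) ⬝ᵥ s := by
      intro s
      rw [dotProduct_comm, Matrix.dotProduct_mulVec, ← Matrix.dotProduct_mulVec, hsym,
        Matrix.dotProduct_mulVec]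
    simp only [h1, h2, h3, h4]
    ring
  · positivity
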